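/- Let n, p, k be integers with 0 ≤ p ≤ n, 1 ≤ k ≤ n−2 and n−k−1 ≤ p−1 whenever p > 0. Let G be a simple graph on n vertices whose complement is the disjoint union of an (n−k−1)-regular graph on p vertices and n−p isolated vertices. Then R'(G) = n/2 − (1/2)·(1/k − 1/(n−1))·p·(n−p). -/

import Mathlib

open scoped Classical

/-- The variation of the Randić index: `R'(G) = ∑_{uv ∈ E(G)} 1 / max(d(u), d(v))`. -/
noncomputable def Rvar {V : Type*} [Fintype V] (G : SimpleGraph V) : ℝ :=
  ∑ e ∈ G.edgeFinset,
    Sym2.lift ⟨fun u v => (1 : ℝ) / (max (G.degree u) (G.degree v) : ℕ),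
      fun u v => by dsimp only; rw [max_comm]⟩ e

open Finset in
lemma sum_nbhd {V : Type*} [Fintype V] (G : SimpleGraph V) [DecidableRel G.Adj] (f : Sym2 V → ℝ) :
    ∑ v, ∑ w ∈ G.neighborFinset v, f s(v, w) = 2 * ∑ e ∈ G.edgeFinset, f e := by
  classical
  have h1 : ∑ d : G.Dart, f d.edge = 2 * ∑ e ∈ G.edgeFinset, f e := by
    rw [← Finset.sum_fiberwise_of_maps_to
      (fun (d : G.Dart) (_ : d ∈ Finset.univ) => (SimpleGraph.mem_edgeFinset).2 d.edge_mem) (fun d => f d.edge)]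
    rw [Finset.mul_sum]
    refine Finset.sum_congr rfl fun e he => ?_
    have hc := G.dart_edge_fiber_card e (SimpleGraph.mem_edgeFinset.1 he)
    calc ∑ d ∈ Finset.univ.filter (fun d : G.Dart => d.edge = e), f d.edge
        = ∑ _d ∈ Finset.univ.filter (fun d : G.Dart => d.edge = e), f e :=
          Finset.sum_congr rfl fun d hd => by rw [(Finset.mem_filter.1 hd).2]
      _ = 2 * f e := by rw [Finset.sum_const, hc, nsmul_eq_mul]; norm_num
  have h2 : ∑ d : G.Dart, f d.edge = ∑ v, ∑ w ∈ G.neighborFinset v, f s(v, w) := by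
    rw [← Finset.sum_fiberwise_of_maps_to (g := fun d : G.Dart => d.fst) (t := Finset.univ)
      (fun d _ => Finset.mem_univ _) (fun d => f d.edge)]
    refine Finset.sum_congr rfl fun v _ => ?_
    rw [show (Finset.univ.filter fun d : G.Dart => d.fst = v)
        = Finset.univ.image (G.dartOfNeighborSet v) from G.dart_fst_fiber v]
    rw [Finset.sum_image (fun a _ b _ h => G.dartOfNeighborSet_injective v h)]
    rw [show G.neighborFinset v = (G.neighborSet v).toFinset from rfl,
      ← Finset.sum_set_coe (f := fun w => f s(v, w))]
    rfl
  rw [← h2, h1]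

theorem stmt_5 {n p k : ℕ} (hp : p ≤ n) (hk : 1 ≤ k) (hkn : k + 2 ≤ n)
    (hpk : 0 < p → n - k - 1 ≤ p - 1)
    {V : Type*} [Fintype V] (G : SimpleGraph V)
    (hcard : Fintype.card V = n)
    -- the complement of `G` is the disjoint union of an `(n-k-1)`-regular graph
    -- on `p` vertices (the set `S`) and `n - p` isolated vertices
    (S : Finset V) (hS : S.card = p)
    (hreg : ∀ v ∈ S, Gᶜ.degree v = n - k - 1)
    (hisol : ∀ v ∉ S, Gᶜ.degree v = 0) :
    Rvar G = (n : ℝ) / 2 - (1 / 2) * (1 / k - 1 / ((n : ℝ) - 1)) * p * (n - p) := by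
  have hn1 : 1 ≤ n := by omega
  have hdeg_lt : ∀ v : V, G.degree v < n := fun v => by
    simpa [hcard] using G.degree_lt_card_verts v
  have hcomp : ∀ v : V, Gᶜ.degree v = n - 1 - G.degree v := fun v => by
    rw [SimpleGraph.degree_compl, hcard]
  have hdS : ∀ v ∈ S, G.degree v = k := by
    intro v hv
    have h := hreg v hv
    rw [hcomp v] at h
    have := hdeg_lt v
    omega
  have hdO : ∀ v ∉ S, G.degree v = n - 1 := by
    intro v hv
    have h := hisol v hv
    rw [hcomp v] at h
    have := hdeg_lt v
    omega
  have hadjO : ∀ v ∉ S, ∀ w, w ≠ v → G.Adj v w := by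
    intro v hv w hw
    by_contra hadj
    have hc : Gᶜ.Adj v w := by
      rw [SimpleGraph.compl_adj]
      exact ⟨Ne.symm hw, hadj⟩
    have hmem : w ∈ Gᶜ.neighborFinset v := by
      rw [SimpleGraph.mem_neighborFinset]; exact hc
    have h0 := hisol v hv
    rw [← SimpleGraph.card_neighborFinset_eq_degree] at h0
    exact absurd (Finset.card_eq_zero.1 h0 ▸ hmem) (Finset.notMem_empty w)
  set F : Sym2 V → ℝ := fun e => Sym2.lift ⟨fun u v => (1 : ℝ) / (max (G.degree u) (G.degree v) : ℕ),
      fun u v => by dsimp only; rw [max_comm]⟩ e with hF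
  have key : ∑ v, ∑ w ∈ G.neighborFinset v, F s(v, w) = 2 * Rvar G := sum_nbhd G F
  have hFval : ∀ u w : V, F s(u, w) = 1 / ((max (G.degree u) (G.degree w) : ℕ) : ℝ) := by
    intro u w
    simp only [hF, Sym2.lift_mk]
  have hsum : ∑ v, ∑ w ∈ G.neighborFinset v, F s(v, w)
      = (p : ℝ) * (((k - (n - p) : ℕ) : ℝ) / (k : ℝ) + ((n - p : ℕ) : ℝ) / ((n - 1 : ℕ) : ℝ))
        + ((n - p : ℕ) : ℝ) * (((n - 1 : ℕ) : ℝ) / ((n - 1 : ℕ) : ℝ)) := by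
    rw [← Finset.sum_sdiff (Finset.subset_univ S)]
    have hA : ∑ v ∈ S, ∑ w ∈ G.neighborFinset v, F s(v, w)
        = (p : ℝ) * (((k - (n - p) : ℕ) : ℝ) / (k : ℝ) + ((n - p : ℕ) : ℝ) / ((n - 1 : ℕ) : ℝ)) := by
      have hconst : ∀ v ∈ S, ∑ w ∈ G.neighborFinset v, F s(v, w)
          = ((k - (n - p) : ℕ) : ℝ) / (k : ℝ) + ((n - p : ℕ) : ℝ) / ((n - 1 : ℕ) : ℝ) := by
        intro v hv
        have hdv := hdS v hv
        have hdiff : G.neighborFinset v \ S = Finset.univ \ S := by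
          ext w
          simp only [Finset.mem_sdiff, SimpleGraph.mem_neighborFinset, Finset.mem_univ, true_and]
          constructor
          · rintro ⟨_, h⟩; exact h
          · intro hw
            exact ⟨(hadjO w hw v (fun h => hw (h ▸ hv))).symm, hw⟩
        have hcdiff : (G.neighborFinset v \ S).card = n - p := by
          rw [hdiff, Finset.card_sdiff_of_subset (Finset.subset_univ S), Finset.card_univ, hcard, hS]
        have hcN : (G.neighborFinset v).card = k := by
          rw [SimpleGraph.card_neighborFinset_eq_degree, hdv]
        have hcint : (G.neighborFinset v ∩ S).card = k - (n - p) := by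
          have := Finset.card_inter_add_card_sdiff (G.neighborFinset v) S
          omega
        rw [← Finset.sum_inter_add_sum_sdiff (G.neighborFinset v) S (fun w => F s(v, w))]
        have h1 : ∀ w ∈ G.neighborFinset v ∩ S, F s(v, w) = 1 / ((k : ℕ) : ℝ) := by
          intro w hw
          rw [hFval, hdv, hdS w (Finset.mem_inter.1 hw).2, max_self]
        have h2 : ∀ w ∈ G.neighborFinset v \ S, F s(v, w) = 1 / ((n - 1 : ℕ) : ℝ) := by
          intro w hw
          rw [hFval, hdv, hdO w (Finset.mem_sdiff.1 hw).2,
            max_eq_right (by omega : k ≤ n - 1)]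
        rw [Finset.sum_congr rfl h1, Finset.sum_congr rfl h2, Finset.sum_const,
          Finset.sum_const, hcint, hcdiff]
        simp [nsmul_eq_mul, mul_one_div, div_eq_mul_inv]
      rw [Finset.sum_congr rfl hconst, Finset.sum_const, hS, nsmul_eq_mul]
    have hB : ∑ v ∈ Finset.univ \ S, ∑ w ∈ G.neighborFinset v, F s(v, w)
        = ((n - p : ℕ) : ℝ) * (((n - 1 : ℕ) : ℝ) / ((n - 1 : ℕ) : ℝ)) := by
      have hconst : ∀ v ∈ Finset.univ \ S, ∑ w ∈ G.neighborFinset v, F s(v, w)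
          = ((n - 1 : ℕ) : ℝ) / ((n - 1 : ℕ) : ℝ) := by
        intro v hv
        have hvS : v ∉ S := (Finset.mem_sdiff.1 hv).2
        have hdv := hdO v hvS
        have h1 : ∀ w ∈ G.neighborFinset v, F s(v, w) = 1 / ((n - 1 : ℕ) : ℝ) := by
          intro w _
          rw [hFval, hdv, max_eq_left (by have := hdeg_lt w; omega : G.degree w ≤ n - 1)]
        rw [Finset.sum_congr rfl h1, Finset.sum_const,
          SimpleGraph.card_neighborFinset_eq_degree, hdv]
        simp [nsmul_eq_mul, mul_one_div, div_eq_mul_inv]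
      rw [Finset.sum_congr rfl hconst, Finset.sum_const, Finset.card_sdiff_of_subset (Finset.subset_univ S),
        Finset.card_univ, hcard, hS, nsmul_eq_mul]
    rw [hA, hB]; ring
  have hkR : (k : ℝ) ≠ 0 := Nat.cast_ne_zero.2 (by omega)
  have hnR : ((n : ℝ) - 1) ≠ 0 := by
    have : (1 : ℝ) < n := by exact_mod_cast (by omega : 1 < n)
    linarith
  have hfin : (p : ℝ) * (((k - (n - p) : ℕ) : ℝ) / (k : ℝ) + ((n - p : ℕ) : ℝ) / ((n - 1 : ℕ) : ℝ))
        + ((n - p : ℕ) : ℝ) * (((n - 1 : ℕ) : ℝ) / ((n - 1 : ℕ) : ℝ))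
      = 2 * ((n : ℝ) / 2 - (1 / 2) * (1 / k - 1 / ((n : ℝ) - 1)) * p * (n - p)) := by
    rcases Nat.eq_zero_or_pos p with hp0 | hp0
    · subst hp0
      push_cast [Nat.cast_sub hn1]
      field_simp
      norm_num
    · have hnp : n - p ≤ k := by have := hpk hp0; omega
      push_cast [Nat.cast_sub hn1, Nat.cast_sub hp, Nat.cast_sub hnp]
      field_simp
      ring
  linarith [key, hsum, hfin]
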